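/- Let (Ω,A,m) = ⊗_{j=1}^N(Ω_j,A_j,m_j) be a product measure space, ρ a density that factorizes as ρ(x) = ρ₁(x^{(1)}) ρ₂(x^{(2)}) over a product splitting of each factor space. Then the anisotropic pseudo-norm is multiplicative, N_{q,m}[ρ] = N_{q,m₁}[ρ₁] · N_{q,m₂}[ρ₂], and consequently the generalized Rényi entropy S_q^{(2)}[ρ,m] := (1−q_N)⁻¹ log N_{q,m}[ρ] is extensive: S_q^{(2)}[ρ,m] = S_q^{(2)}[ρ₁,m₁] + S_q^{(2)}[ρ₂,m₂]. -/

import Mathlib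

open MeasureTheory ENNReal

/-- The iterated (anisotropic) functional
`N_q[ρ] = ∫_{Ω₁}(⋯(∫_{Ω_N} ρ^{q_N} dm_N)^{q_{N-1}}⋯)^{q₁} dm₁`,
defined recursively: the outermost integral is over the first factor. -/
noncomputable def NQe : (N : ℕ) → (Ω : Fin N → Type) →
    (inst : ∀ i, MeasurableSpace (Ω i)) →
    (m : ∀ i, @MeasureTheory.Measure (Ω i) (inst i)) → (q : Fin N → ℝ) →
    ((∀ i, Ω i) → ℝ≥0∞) → ℝ≥0∞
  | 0, _, _, _, _, ρ => ρ fun i => i.elim0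
  | _ + 1, Ω, inst, m, q, ρ =>
      @MeasureTheory.lintegral (Ω 0) (inst 0) (m 0) fun x0 =>
        (NQe _ (fun i => Ω i.succ) (fun i => inst i.succ) (fun i => m i.succ)
            (fun i => q i.succ) fun xs => ρ (Fin.cons x0 xs)) ^ q 0

lemma measurable_cons_comp {N : ℕ} {α : Type} [MeasurableSpace α] {Ω : Fin (N+1) → Type}
    [inst : ∀ i, MeasurableSpace (Ω i)] :
    Measurable fun p : (α × Ω 0) × (∀ i : Fin N, Ω i.succ) =>
      ((p.1.1, Fin.cons p.1.2 p.2) : α × (∀ i, Ω i)) := by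
  refine Measurable.prodMk (measurable_fst.comp measurable_fst) ?_
  refine measurable_pi_lambda _ fun i => ?_
  refine Fin.cases ?_ (fun j => ?_) i
  · exact measurable_snd.comp measurable_fst
  · simpa [Function.comp_def] using (measurable_pi_apply j).comp measurable_snd

lemma NQe_meas {α : Type} [MeasurableSpace α] :
    ∀ (N : ℕ) (Ω : Fin N → Type) (inst : ∀ i, MeasurableSpace (Ω i))
      (m : ∀ i, @Measure (Ω i) (inst i)) (_ : ∀ i, SigmaFinite (m i)) (q : Fin N → ℝ)
      (ρ : α × (∀ i, Ω i) → ℝ≥0∞) (_ : Measurable ρ),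
      Measurable fun a => NQe N Ω inst m q (fun xs => ρ (a, xs))
  | 0, Ω, inst, m, _, q, ρ, hρ => by
    simp only [NQe]
    exact hρ.comp (measurable_id.prodMk measurable_const)
  | (N+1), Ω, inst, m, sf, q, ρ, hρ => by
    simp only [NQe]
    haveI : SigmaFinite (m 0) := sf 0
    have ih := NQe_meas N (fun i => Ω i.succ) (fun i => inst i.succ) (fun i => m i.succ)
      (fun i => sf i.succ) (fun i => q i.succ)
      (fun p : (α × Ω 0) × (∀ i : Fin N, Ω i.succ) => ρ (p.1.1, Fin.cons p.1.2 p.2))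
      (hρ.comp measurable_cons_comp)
    exact Measurable.lintegral_prod_right (f := fun a x0 =>
      (NQe N (fun i => Ω i.succ) (fun i => inst i.succ) (fun i => m i.succ)
        (fun i => q i.succ) fun xs => ρ (a, Fin.cons x0 xs)) ^ q 0)
      (ih.pow_const _)

lemma NQe_mul :
    ∀ (N : ℕ) (Ω₁ Ω₂ : Fin N → Type)
      (j₁ : ∀ i, MeasurableSpace (Ω₁ i)) (j₂ : ∀ i, MeasurableSpace (Ω₂ i))
      (m₁ : ∀ i, @Measure (Ω₁ i) (j₁ i)) (m₂ : ∀ i, @Measure (Ω₂ i) (j₂ i))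
      (_ : ∀ i, SigmaFinite (m₁ i)) (_ : ∀ i, SigmaFinite (m₂ i))
      (q : Fin N → ℝ) (_ : ∀ k, 0 ≤ q k)
      (ρ₁ : (∀ i, Ω₁ i) → ℝ≥0∞) (ρ₂ : (∀ i, Ω₂ i) → ℝ≥0∞)
      (_ : Measurable ρ₁) (_ : Measurable ρ₂),
      NQe N (fun i => Ω₁ i × Ω₂ i) (fun i => @Prod.instMeasurableSpace _ _ (j₁ i) (j₂ i))
        (fun i => (m₁ i).prod (m₂ i)) q
        (fun x => ρ₁ (fun i => (x i).1) * ρ₂ (fun i => (x i).2)) =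
      NQe N Ω₁ j₁ m₁ q ρ₁ * NQe N Ω₂ j₂ m₂ q ρ₂
  | 0, Ω₁, Ω₂, j₁, j₂, m₁, m₂, _, _, q, _, ρ₁, ρ₂, _, _ => by
    simp only [NQe]
    exact congrArg₂ _ (congrArg ρ₁ (funext fun i => i.elim0))
      (congrArg ρ₂ (funext fun i => i.elim0))
  | (N+1), Ω₁, Ω₂, j₁, j₂, m₁, m₂, sf₁, sf₂, q, hq, ρ₁, ρ₂, hρ₁, hρ₂ => by
    simp only [NQe]
    haveI : SigmaFinite (m₁ 0) := sf₁ 0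
    haveI : SigmaFinite (m₂ 0) := sf₂ 0
    have key : ∀ p : Ω₁ 0 × Ω₂ 0,
        (NQe N (fun i => Ω₁ i.succ × Ω₂ i.succ)
          (fun i => @Prod.instMeasurableSpace _ _ (j₁ i.succ) (j₂ i.succ))
          (fun i => (m₁ i.succ).prod (m₂ i.succ)) (fun i => q i.succ)
          fun xs => ρ₁ (fun i => (Fin.cons (α := fun i : Fin (N+1) => Ω₁ i × Ω₂ i) p xs i).1) *
            ρ₂ (fun i => (Fin.cons (α := fun i : Fin (N+1) => Ω₁ i × Ω₂ i) p xs i).2)) =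
        (NQe N (fun i => Ω₁ i.succ) (fun i => j₁ i.succ) (fun i => m₁ i.succ)
          (fun i => q i.succ) fun xs => ρ₁ (Fin.cons p.1 xs)) *
        (NQe N (fun i => Ω₂ i.succ) (fun i => j₂ i.succ) (fun i => m₂ i.succ)
          (fun i => q i.succ) fun xs => ρ₂ (Fin.cons p.2 xs)) := by
      intro p
      have h1 : ∀ xs : ∀ i : Fin N, Ω₁ i.succ × Ω₂ i.succ,
          (fun i => (Fin.cons (α := fun i : Fin (N+1) => Ω₁ i × Ω₂ i) p xs i).1)
            = Fin.cons p.1 (fun i => (xs i).1) := by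
        intro xs; funext i
        refine Fin.cases rfl (fun j => ?_) i <;> simp
      have h2 : ∀ xs : ∀ i : Fin N, Ω₁ i.succ × Ω₂ i.succ,
          (fun i => (Fin.cons (α := fun i : Fin (N+1) => Ω₁ i × Ω₂ i) p xs i).2)
            = Fin.cons p.2 (fun i => (xs i).2) := by
        intro xs; funext i
        refine Fin.cases rfl (fun j => ?_) i <;> simp
      have := NQe_mul N (fun i => Ω₁ i.succ) (fun i => Ω₂ i.succ)
        (fun i => j₁ i.succ) (fun i => j₂ i.succ)
        (fun i => m₁ i.succ) (fun i => m₂ i.succ)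
        (fun i => sf₁ i.succ) (fun i => sf₂ i.succ)
        (fun i => q i.succ) (fun i => hq i.succ)
        (fun xs => ρ₁ (Fin.cons p.1 xs)) (fun xs => ρ₂ (Fin.cons p.2 xs))
        (hρ₁.comp (by
          refine measurable_pi_lambda _ fun i => ?_
          refine Fin.cases ?_ (fun j => ?_) i
          · exact measurable_const
          · simpa using measurable_pi_apply j))
        (hρ₂.comp (by
          refine measurable_pi_lambda _ fun i => ?_
          refine Fin.cases ?_ (fun j => ?_) i
          · exact measurable_const
          · simpa using measurable_pi_apply j))
      simp only [h1, h2] at *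
      exact this
    refine Eq.trans (lintegral_congr fun p => ?_) (lintegral_prod_mul ?_ ?_)
    · rw [key p, ENNReal.mul_rpow_of_nonneg _ _ (hq 0)]
    · exact ((NQe_meas N (fun i => Ω₁ i.succ) (fun i => j₁ i.succ) (fun i => m₁ i.succ)
        (fun i => sf₁ i.succ) (fun i => q i.succ)
        (fun p : Ω₁ 0 × (∀ i : Fin N, Ω₁ i.succ) => ρ₁ (Fin.cons p.1 p.2)) (hρ₁.comp (by
          refine measurable_pi_lambda _ fun i => ?_
          refine Fin.cases ?_ (fun j => ?_) i
          · exact measurable_fst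
          · simpa [Function.comp_def] using (measurable_pi_apply j).comp measurable_snd))).pow_const _).aemeasurable
    · exact ((NQe_meas N (fun i => Ω₂ i.succ) (fun i => j₂ i.succ) (fun i => m₂ i.succ)
        (fun i => sf₂ i.succ) (fun i => q i.succ)
        (fun p : Ω₂ 0 × (∀ i : Fin N, Ω₂ i.succ) => ρ₂ (Fin.cons p.1 p.2)) (hρ₂.comp (by
          refine measurable_pi_lambda _ fun i => ?_
          refine Fin.cases ?_ (fun j => ?_) i
          · exact measurable_fst
          · simpa [Function.comp_def] using (measurable_pi_apply j).comp measurable_snd))).pow_const _).aemeasurable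


/-- Multiplicativity of the anisotropic pseudo-norm over a product splitting of each
factor space, and the resulting extensivity of the generalized Rényi entropy
`S_q^{(2)}[ρ] = (1-q_N)⁻¹ log N_q[ρ]` for factorized densities. -/
theorem stmt19 (N : ℕ) (Ω₁ Ω₂ : Fin (N + 1) → Type)
    [i₁ : ∀ i, MeasurableSpace (Ω₁ i)] [i₂ : ∀ i, MeasurableSpace (Ω₂ i)]
    (m₁ : ∀ i, Measure (Ω₁ i)) (m₂ : ∀ i, Measure (Ω₂ i))
    [∀ i, SigmaFinite (m₁ i)] [∀ i, SigmaFinite (m₂ i)]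
    (q : Fin (N + 1) → ℝ) (hq : ∀ k, 0 < q k ∧ q k ≤ 1)
    (ρ₁ : (∀ i, Ω₁ i) → ℝ≥0∞) (ρ₂ : (∀ i, Ω₂ i) → ℝ≥0∞)
    (hρ₁ : Measurable ρ₁) (hρ₂ : Measurable ρ₂)
    (hρ₁_norm : ∫⁻ x, ρ₁ x ∂(Measure.pi m₁) = 1)
    (hρ₂_norm : ∫⁻ x, ρ₂ x ∂(Measure.pi m₂) = 1)
    (h₁0 : NQe (N + 1) Ω₁ (fun i => inferInstance) m₁ q ρ₁ ≠ 0)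
    (h₁t : NQe (N + 1) Ω₁ (fun i => inferInstance) m₁ q ρ₁ ≠ ⊤)
    (h₂0 : NQe (N + 1) Ω₂ (fun i => inferInstance) m₂ q ρ₂ ≠ 0)
    (h₂t : NQe (N + 1) Ω₂ (fun i => inferInstance) m₂ q ρ₂ ≠ ⊤) :
    NQe (N + 1) (fun i => Ω₁ i × Ω₂ i) (fun i => inferInstance)
        (fun i => (m₁ i).prod (m₂ i)) q
        (fun x => ρ₁ (fun i => (x i).1) * ρ₂ (fun i => (x i).2)) =
      NQe (N + 1) Ω₁ (fun i => inferInstance) m₁ q ρ₁ *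
        NQe (N + 1) Ω₂ (fun i => inferInstance) m₂ q ρ₂ ∧
    (1 - q (Fin.last N))⁻¹ *
        Real.log ((NQe (N + 1) (fun i => Ω₁ i × Ω₂ i) (fun i => inferInstance)
          (fun i => (m₁ i).prod (m₂ i)) q
          (fun x => ρ₁ (fun i => (x i).1) * ρ₂ (fun i => (x i).2))).toReal) =
      (1 - q (Fin.last N))⁻¹ *
          Real.log ((NQe (N + 1) Ω₁ (fun i => inferInstance) m₁ q ρ₁).toReal) +
        (1 - q (Fin.last N))⁻¹ *
          Real.log ((NQe (N + 1) Ω₂ (fun i => inferInstance) m₂ q ρ₂).toReal) := by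
  have hmul := NQe_mul (N + 1) Ω₁ Ω₂ i₁ i₂ m₁ m₂ inferInstance inferInstance q
    (fun k => (hq k).1.le) ρ₁ ρ₂ hρ₁ hρ₂
  refine ⟨hmul, ?_⟩
  rw [hmul, ENNReal.toReal_mul, Real.log_mul, mul_add]
  · exact ENNReal.toReal_ne_zero.mpr ⟨h₁0, h₁t⟩
  · exact ENNReal.toReal_ne_zero.mpr ⟨h₂0, h₂t⟩
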